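/- arXiv:1110.5666 — 2 statements merged into one kernel-verified Lean document; each statement's English description precedes it below -/
import Mathlib

section
/- With delta_g^{(2c)} defined by delta_1^{(2c)} = d-c and delta_{g+1}^{(2c)} = sum_{a=0}^{d-1}(d - max(a,c)) delta_g^{(2a)}, and with p = 2d+1, one has delta_3^{(0)} = (p-1)p(p+1)(p^2+1)/240. -/
open Finset

lemma sq_sum (n : ℕ) : ∑ i ∈ range n, ((i:ℚ)+1)^2 = (n:ℚ)*((n:ℚ)+1)*(2*(n:ℚ)+1)/6 := by
  induction n with
  | zero => simp
  | succ n ih => rw [sum_range_succ, ih]; push_cast; ring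

lemma gsum (d : ℕ) :
    ∑ i ∈ range d, ∑ j ∈ range d, ((i:ℚ)+1)*((j:ℚ)+1)*((min i j : ℕ)+1)
      = (d:ℚ)*((d:ℚ)+1)*(2*(d:ℚ)+1)*(2*(d:ℚ)^2+2*(d:ℚ)+1)/30 := by
  induction d with
  | zero => simp
  | succ d ih =>
    rw [sum_range_succ]
    have hA : ∑ i ∈ range d, ∑ j ∈ range (d+1), ((i:ℚ)+1)*((j:ℚ)+1)*((min i j : ℕ)+1)
        = (∑ i ∈ range d, ∑ j ∈ range d, ((i:ℚ)+1)*((j:ℚ)+1)*((min i j : ℕ)+1))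
          + ((d:ℚ)+1) * ∑ i ∈ range d, ((i:ℚ)+1)^2 := by
      calc ∑ i ∈ range d, ∑ j ∈ range (d+1), ((i:ℚ)+1)*((j:ℚ)+1)*((min i j : ℕ)+1)
          = ∑ i ∈ range d, ((∑ j ∈ range d, ((i:ℚ)+1)*((j:ℚ)+1)*((min i j : ℕ)+1))
              + ((d:ℚ)+1)*((i:ℚ)+1)^2) := by
            apply sum_congr rfl
            intro i hi
            rw [sum_range_succ, min_eq_left (le_of_lt (mem_range.mp hi))]
            push_cast; ring
        _ = _ := by rw [sum_add_distrib, ← mul_sum]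
    have hB : ∑ j ∈ range (d+1), ((d:ℚ)+1)*((j:ℚ)+1)*((min d j : ℕ)+1)
        = ((d:ℚ)+1) * (∑ j ∈ range d, ((j:ℚ)+1)^2) + ((d:ℚ)+1)^3 := by
      rw [sum_range_succ, min_self, mul_sum]
      congr 1
      · apply sum_congr rfl
        intro j hj
        rw [min_eq_right (le_of_lt (mem_range.mp hj))]
        ring
      · ring
    rw [hA, hB, ih, sq_sum]
    push_cast
    ring

lemma key (d : ℕ) :
    ∑ a ∈ range d, ((d:ℚ) - a) * ∑ b ∈ range d, ((d:ℚ) - max (b:ℚ) (a:ℚ)) * ((d:ℚ) - b)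
      = ∑ i ∈ range d, ∑ j ∈ range d, ((i:ℚ)+1)*((j:ℚ)+1)*((min i j : ℕ)+1) := by
  rw [← sum_range_reflect]
  apply sum_congr rfl
  intro i hi
  have hi' := mem_range.mp hi
  have h1 : (d:ℚ) - ((d - 1 - i : ℕ):ℚ) = (i:ℚ) + 1 := by
    have h : (d - 1 - i) + (i + 1) = d := by omega
    have := congrArg (Nat.cast : ℕ → ℚ) h
    push_cast at this
    linarith
  rw [h1, ← sum_range_reflect, mul_sum]
  apply sum_congr rfl
  intro j hj
  have hj' := mem_range.mp hj
  have h2 : (d:ℚ) - ((d - 1 - j : ℕ):ℚ) = (j:ℚ) + 1 := by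
    have h : (d - 1 - j) + (j + 1) = d := by omega
    have := congrArg (Nat.cast : ℕ → ℚ) h
    push_cast at this
    linarith
  have h3 : max ((d - 1 - j : ℕ):ℚ) ((d - 1 - i : ℕ):ℚ) = ((d - 1 - min i j : ℕ):ℚ) := by
    rw [← Nat.cast_max]
    congr 1
    omega
  have h4 : (d:ℚ) - ((d - 1 - min i j : ℕ):ℚ) = ((min i j : ℕ):ℚ) + 1 := by
    have h : (d - 1 - min i j) + (min i j + 1) = d := by omega
    have := congrArg (Nat.cast : ℕ → ℚ) h
    push_cast at this
    push_cast
    linarith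
  rw [h2, h3, h4]
  ring

/-- `delta d g c` is `δ_g^{(2c)}` for `p = 2d+1`, with `δ_0^{(0)} = 1`, `δ_0^{(2c)} = 0` for
`c ≠ 0`, and `δ_{g+1}^{(2c)} = ∑_{a=0}^{d-1} (d - max a c) δ_g^{(2a)}`; in particular
`δ_1^{(2c)} = d - c`. -/
def delta (d : ℕ) : ℕ → ℕ → ℚ
  | 0, c => if c = 0 then 1 else 0
  | g + 1, c => ∑ a ∈ Finset.range d, ((d : ℚ) - max a c) * delta d g a

lemma delta_one (d : ℕ) (hd : 1 ≤ d) (c : ℕ) : delta d 1 c = (d:ℚ) - c := by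
  rw [delta]
  simp only [delta, mul_ite, mul_one, mul_zero]
  rw [sum_ite_eq' (range d) 0]
  simp [mem_range.mpr hd]

theorem delta_three (d : ℕ) (hd : 1 ≤ d) (p : ℚ) (hp : p = 2 * d + 1) :
    delta d 3 0 = (p - 1) * p * (p + 1) * (p ^ 2 + 1) / 240 := by
  have h30 : delta d 3 0
      = ∑ a ∈ range d, ((d:ℚ) - a) * ∑ b ∈ range d, ((d:ℚ) - max (b:ℚ) (a:ℚ)) * ((d:ℚ) - b) := by
    rw [delta]
    apply sum_congr rfl
    intro a _
    rw [delta]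
    simp only [delta_one d hd]
    simp
  rw [h30, key, gsum, hp]
  ring
end

section
/- With delta_g^{(2c)} defined by the recursion delta_1^{(2c)} = d-c and delta_{g+1}^{(2c)} = sum_{a=0}^{d-1}(d - max(a,c)) delta_g^{(2a)}, and hat-K = sum_{n=0}^{d-1}(-1)^n (d-n) e_{2n} in the Verlinde algebra V_p, one has for all g >= 0: hat-K^g = sum_{c=0}^{d-1} (-1)^c delta_g^{(2c)} e_{2c}, where delta_0^{(0)} = 1 and delta_0^{(2c)} = 0 for c ≠ 0. Equivalently, (-1)^c delta_g^{(2c)} = M(hat-K^g)_{c,0}. -/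
/-- Chebyshev polynomials of the second kind: `e 0 = 1`, `e 1 = z`,
`e (n+2) = z * e (n+1) - e n`. -/
noncomputable def cheb (K : Type*) [Field K] : ℕ → Polynomial K
  | 0 => 1
  | 1 => Polynomial.X
  | n + 2 => Polynomial.X * cheb K (n + 1) - cheb K n

open Polynomial Finset
variable {K : Type*} [Field K]
lemma cheb_zero : cheb K 0 = 1 := rfl
lemma cheb_one : cheb K 1 = X := rfl
lemma cheb_add_two (n : ℕ) : cheb K (n+2) = X * cheb K (n+1) - cheb K n := by rw [cheb]
lemma X_mul_cheb (n : ℕ) : X * cheb K (n+1) = cheb K (n+2) + cheb K n := by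
  rw [cheb_add_two]; ring
lemma X_sq_mul_cheb (n : ℕ) :
    X^2 * cheb K (n+2) = cheb K (n+4) + 2 * cheb K (n+2) + cheb K n := by
  have h2 : cheb K (n+2) = X * cheb K (n+1) - cheb K n := cheb_add_two n
  have h3 : cheb K (n+3) = X * cheb K (n+2) - cheb K (n+1) := cheb_add_two (n+1)
  have h4 : cheb K (n+4) = X * cheb K (n+3) - cheb K (n+2) := cheb_add_two (n+2)
  rw [h4, h3, h2]; ring
lemma X_sq_mul_cheb_zero : (X:Polynomial K)^2 * cheb K 0 = cheb K 2 + cheb K 0 := by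
  have h2 : cheb K 2 = X * cheb K 1 - cheb K 0 := cheb_add_two 0
  rw [h2, cheb_one, cheb_zero]; ring

lemma cheb_pair (m : ℕ) : cheb K (2*m+2) = cheb K (m+1)^2 - cheb K m^2
    ∧ cheb K (2*m+3) = cheb K (m+1) * (cheb K (m+2) - cheb K m) := by
  induction m with
  | zero =>
      have h2 : cheb K 2 = X * cheb K 1 - cheb K 0 := cheb_add_two 0
      have h3 : cheb K 3 = X * cheb K 2 - cheb K 1 := cheb_add_two 1
      constructor
      · show cheb K 2 = cheb K 1^2 - cheb K 0^2
        rw [h2, cheb_one, cheb_zero]; ring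
      · show cheb K 3 = cheb K 1 * (cheb K 2 - cheb K 0)
        rw [h3, h2, cheb_one, cheb_zero]; ring
  | succ m ih =>
      obtain ⟨h1, h2⟩ := ih
      have e1 : cheb K (2*m+4) = X * cheb K (2*m+3) - cheb K (2*m+2) := cheb_add_two (2*m+2)
      have e2 : cheb K (2*m+5) = X * cheb K (2*m+4) - cheb K (2*m+3) := cheb_add_two (2*m+3)
      have hx1 : X * cheb K (m+1) = cheb K (m+2) + cheb K m := X_mul_cheb m
      have hx2 : X * cheb K (m+2) = cheb K (m+3) + cheb K (m+1) := X_mul_cheb (m+1)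
      constructor
      · show cheb K (2*m+4) = cheb K (m+2)^2 - cheb K (m+1)^2
        rw [e1, h2, h1]
        linear_combination (cheb K (m+2) - cheb K m) * hx1
      · show cheb K (2*m+5) = cheb K (m+2) * (cheb K (m+3) - cheb K (m+1))
        rw [e2, e1, h2, h1]
        linear_combination (X*(cheb K (m+2) - cheb K m) - cheb K (m+1)) * hx1
          + cheb K (m+2) * hx2

lemma alt_sum (a : ℕ) :
    (X:Polynomial K)^2 * ∑ c ∈ range (a+1), (-1 : Polynomial K)^c * cheb K (2*c)
      = (-1)^a * (cheb K (2*a+2) + cheb K (2*a)) := by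
  induction a with
  | zero => simpa using X_sq_mul_cheb_zero (K := K)
  | succ a ih =>
      rw [Finset.sum_range_succ, mul_add]
      have h : (X:Polynomial K)^2 * cheb K (2*a+2)
          = cheb K (2*a+4) + 2 * cheb K (2*a+2) + cheb K (2*a) := X_sq_mul_cheb (2*a)
      have hc : cheb K (2*(a+1)) = cheb K (2*a+2) := rfl
      have hc2 : cheb K (2*(a+1)+2) = cheb K (2*a+4) := rfl
      rw [hc, hc2]
      linear_combination ih + (-1:Polynomial K)^(a+1) * h

lemma base_identity (d : ℕ) :
    (X:Polynomial K)^2 * ∑ n ∈ range (d+1),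
        (-1:Polynomial K)^n * C ((d:K) + 1 - (n:K)) * cheb K (2*n)
      = 1 + (-1)^d * cheb K (2*d+2) := by
  induction d with
  | zero =>
      have h2 : cheb K 2 = X * cheb K 1 - cheb K 0 := cheb_add_two 0
      simp [cheb_zero, h2, cheb_one]
      ring
  | succ d ih =>
      have hsplit : ∀ n ∈ range (d+2),
          (-1:Polynomial K)^n * C ((((d+1:ℕ)):K) + 1 - (n:K)) * cheb K (2*n)
            = (-1:Polynomial K)^n * C ((d:K) + 1 - (n:K)) * cheb K (2*n)
              + (-1:Polynomial K)^n * cheb K (2*n) := by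
        intro n _
        have hco : (((d+1:ℕ)):K) + 1 - (n:K) = ((d:K) + 1 - (n:K)) + 1 := by
          push_cast; ring
        rw [hco, map_add, map_one]; ring
      rw [Finset.sum_congr rfl hsplit, Finset.sum_add_distrib, mul_add]
      have hlast : ∑ n ∈ range (d+2),
          (-1:Polynomial K)^n * C ((d:K) + 1 - (n:K)) * cheb K (2*n)
            = ∑ n ∈ range (d+1),
          (-1:Polynomial K)^n * C ((d:K) + 1 - (n:K)) * cheb K (2*n) := by
        rw [Finset.sum_range_succ]
        have : (d:K) + 1 - (((d+1:ℕ)):K) = 0 := by push_cast; ring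
        simp [this]
      have h4 : (X:Polynomial K)^2 * ∑ c ∈ range (d+2), (-1:Polynomial K)^c * cheb K (2*c)
          = (-1)^(d+1) * (cheb K (2*d+4) + cheb K (2*d+2)) := alt_sum (d+1)
      have hc2 : cheb K (2*(d+1)+2) = cheb K (2*d+4) := rfl
      rw [hlast, ih, h4, hc2]
      ring

lemma key_identity (d : ℕ) : ∀ a, a ≤ d →
    (X:Polynomial K)^2 * ∑ c ∈ range (d+1),
        (-1:Polynomial K)^c * C ((d:K) + 1 - ((max a c : ℕ):K)) * cheb K (2*c)
      = (-1)^a * cheb K (2*a) + (-1)^d * cheb K (2*d+2) := by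
  intro a
  induction a with
  | zero =>
      intro _
      simpa [Nat.zero_max, cheb_zero] using base_identity (K := K) d
  | succ a iha =>
      intro ha
      have ih := iha (by omega)
      have hdiff : ∑ c ∈ range (d+1),
            (-1:Polynomial K)^c * C ((d:K) + 1 - ((max a c : ℕ):K)) * cheb K (2*c)
          = (∑ c ∈ range (d+1),
            (-1:Polynomial K)^c * C ((d:K) + 1 - ((max (a+1) c : ℕ):K)) * cheb K (2*c))
            + ∑ c ∈ range (a+1), (-1:Polynomial K)^c * cheb K (2*c) := by
        have hext : ∑ c ∈ range (a+1), (-1:Polynomial K)^c * cheb K (2*c)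
            = ∑ c ∈ range (d+1),
              (if c ≤ a then (-1:Polynomial K)^c * cheb K (2*c) else 0) := by
          rw [← Finset.sum_subset (Finset.range_subset_range.2 (by omega : a+1 ≤ d+1))
            (fun x _ hx => if_neg (by simp at hx; omega))]
          exact Finset.sum_congr rfl fun x hx => (if_pos (by simp at hx; omega)).symm
        rw [hext, ← Finset.sum_add_distrib]
        refine Finset.sum_congr rfl fun c _ => ?_
        by_cases hca : c ≤ a
        · rw [if_pos hca, Nat.max_eq_left hca, Nat.max_eq_left (by omega : c ≤ a+1)]
          have hco : (d:K) + 1 - ((a:ℕ):K) = ((d:K) + 1 - (((a+1:ℕ)):K)) + 1 := by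
            push_cast; ring
          rw [hco, map_add, map_one]; ring
        · rw [if_neg hca, Nat.max_eq_right (by omega : a ≤ c),
            Nat.max_eq_right (by omega : a+1 ≤ c), add_zero]
      have h2 : ∑ c ∈ range (d+1),
            (-1:Polynomial K)^c * C ((d:K) + 1 - ((max (a+1) c : ℕ):K)) * cheb K (2*c)
          = (∑ c ∈ range (d+1),
            (-1:Polynomial K)^c * C ((d:K) + 1 - ((max a c : ℕ):K)) * cheb K (2*c))
            - ∑ c ∈ range (a+1), (-1:Polynomial K)^c * cheb K (2*c) := by
        linear_combination -hdiff
      rw [h2, mul_sub, ih, alt_sum a]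
      have hc : cheb K (2*(a+1)) = cheb K (2*a+2) := rfl
      rw [hc]
      ring

lemma main_clean {K : Type*} [Field K] [Algebra ℚ K] (e g : ℕ) :
    Ideal.Quotient.mk (Ideal.span {cheb K (e+1) - cheb K e})
        (∑ n ∈ Finset.range (e+1),
          (-1:Polynomial K)^n * C ((e:K) + 1 - (n:K)) * cheb K (2 * n)) ^ g
      = Ideal.Quotient.mk (Ideal.span {cheb K (e+1) - cheb K e})
        (∑ c ∈ Finset.range (e+1),
          (-1:Polynomial K)^c * C (algebraMap ℚ K (delta (e+1) g c)) * cheb K (2 * c)) := by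
  set mk := Ideal.Quotient.mk (Ideal.span {cheb K (e+1) - cheb K e}) with hmk
  have hgen : mk (cheb K (e+1) - cheb K e) = 0 := by
    rw [hmk, Ideal.Quotient.eq_zero_iff_mem]
    exact Ideal.subset_span rfl
  have h2d : mk (cheb K (2*e+2)) = 0 := by
    have hp := (cheb_pair (K:=K) e).1
    have hfac : cheb K (2*e+2) = (cheb K (e+1) + cheb K e) * (cheb K (e+1) - cheb K e) := by
      rw [hp]; ring
    rw [hfac, map_mul, hgen, mul_zero]
  have hXK : mk ((X:Polynomial K)^2) * mk (∑ n ∈ Finset.range (e+1),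
      (-1:Polynomial K)^n * C ((e:K) + 1 - (n:K)) * cheb K (2 * n)) = 1 := by
    rw [← map_mul, base_identity e, map_add, map_one, map_mul, h2d, mul_zero, add_zero]
  induction g with
  | zero =>
      rw [pow_zero]
      have h0 : (∑ c ∈ Finset.range (e+1),
          (-1:Polynomial K)^c * C (algebraMap ℚ K (delta (e+1) 0 c)) * cheb K (2*c)) = 1 := by
        rw [Finset.sum_eq_single 0]
        · simp [delta, cheb_zero]
        · intro b _ hb; simp [delta, hb]
        · intro h; simp at h
      rw [h0, map_one]
  | succ g ih =>
      -- polynomial identity for X^2 * X_{g+1}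
      have h1 : (∑ c ∈ Finset.range (e+1),
            (-1:Polynomial K)^c * C (algebraMap ℚ K (delta (e+1) (g+1) c)) * cheb K (2*c))
          = ∑ a ∈ Finset.range (e+1), C (algebraMap ℚ K (delta (e+1) g a)) *
              (∑ c ∈ Finset.range (e+1),
                (-1:Polynomial K)^c * C ((e:K) + 1 - ((max a c : ℕ):K)) * cheb K (2*c)) := by
        have hco : ∀ a c : ℕ, (algebraMap ℚ K) (((e+1:ℕ):ℚ) - ((max a c : ℕ):ℚ))
            = (e:K) + 1 - ((max a c : ℕ):K) := by
          intro a c; rw [map_sub, map_natCast, map_natCast]; push_cast; ring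
        calc (∑ c ∈ Finset.range (e+1),
            (-1:Polynomial K)^c * C (algebraMap ℚ K (delta (e+1) (g+1) c)) * cheb K (2*c))
            = ∑ c ∈ Finset.range (e+1), ∑ a ∈ Finset.range (e+1),
              C (algebraMap ℚ K (delta (e+1) g a)) *
                ((-1:Polynomial K)^c * C ((e:K) + 1 - ((max a c : ℕ):K)) * cheb K (2*c)) := by
              refine Finset.sum_congr rfl fun c _ => ?_
              have hd : delta (e+1) (g+1) c
                  = ∑ a ∈ Finset.range (e+1), (((e+1:ℕ):ℚ) - ((max a c : ℕ):ℚ)) * delta (e+1) g a := by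
                simp only [delta]
              rw [hd, map_sum, map_sum, Finset.mul_sum, Finset.sum_mul]
              refine Finset.sum_congr rfl fun a _ => ?_
              rw [map_mul, map_mul, hco a c]
              ring
          _ = _ := by
              rw [Finset.sum_comm]
              exact Finset.sum_congr rfl fun a _ => (Finset.mul_sum _ _ _).symm
      have h2 : (X:Polynomial K)^2 * (∑ c ∈ Finset.range (e+1),
            (-1:Polynomial K)^c * C (algebraMap ℚ K (delta (e+1) (g+1) c)) * cheb K (2*c))
          = (∑ c ∈ Finset.range (e+1),
              (-1:Polynomial K)^c * C (algebraMap ℚ K (delta (e+1) g c)) * cheb K (2*c))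
            + (∑ a ∈ Finset.range (e+1), C (algebraMap ℚ K (delta (e+1) g a)))
              * ((-1:Polynomial K)^e * cheb K (2*e+2)) := by
        rw [h1, Finset.mul_sum]
        have hterm : ∀ a ∈ Finset.range (e+1),
            (X:Polynomial K)^2 * (C (algebraMap ℚ K (delta (e+1) g a)) *
              (∑ c ∈ Finset.range (e+1),
                (-1:Polynomial K)^c * C ((e:K) + 1 - ((max a c : ℕ):K)) * cheb K (2*c)))
            = C (algebraMap ℚ K (delta (e+1) g a)) * ((-1)^a * cheb K (2*a))
              + C (algebraMap ℚ K (delta (e+1) g a)) * ((-1:Polynomial K)^e * cheb K (2*e+2)) := by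
          intro a ha
          have hk := key_identity (K:=K) e a (by simp at ha; omega)
          calc (X:Polynomial K)^2 * (C (algebraMap ℚ K (delta (e+1) g a)) *
              (∑ c ∈ Finset.range (e+1),
                (-1:Polynomial K)^c * C ((e:K) + 1 - ((max a c : ℕ):K)) * cheb K (2*c)))
              = C (algebraMap ℚ K (delta (e+1) g a)) * ((X:Polynomial K)^2 *
                (∑ c ∈ Finset.range (e+1),
                  (-1:Polynomial K)^c * C ((e:K) + 1 - ((max a c : ℕ):K)) * cheb K (2*c))) := by
                ring
            _ = _ := by rw [hk]; ring
        rw [Finset.sum_congr rfl hterm, Finset.sum_add_distrib, Finset.sum_mul]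
        refine congrArg₂ (· + ·) (Finset.sum_congr rfl fun c _ => by ring)
          (Finset.sum_congr rfl fun a _ => rfl)
      have hstep : mk ((X:Polynomial K)^2) * mk (∑ c ∈ Finset.range (e+1),
            (-1:Polynomial K)^c * C (algebraMap ℚ K (delta (e+1) (g+1) c)) * cheb K (2*c))
          = mk (∑ c ∈ Finset.range (e+1),
            (-1:Polynomial K)^c * C (algebraMap ℚ K (delta (e+1) g c)) * cheb K (2*c)) := by
        rw [← map_mul, h2, map_add, map_mul, map_mul, h2d, mul_zero, mul_zero, add_zero]
      calc mk (∑ n ∈ Finset.range (e+1),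
            (-1:Polynomial K)^n * C ((e:K) + 1 - (n:K)) * cheb K (2 * n)) ^ (g+1)
          = mk (∑ n ∈ Finset.range (e+1),
              (-1:Polynomial K)^n * C ((e:K) + 1 - (n:K)) * cheb K (2 * n))
            * mk (∑ n ∈ Finset.range (e+1),
              (-1:Polynomial K)^n * C ((e:K) + 1 - (n:K)) * cheb K (2 * n)) ^ g := by ring
        _ = mk (∑ n ∈ Finset.range (e+1),
              (-1:Polynomial K)^n * C ((e:K) + 1 - (n:K)) * cheb K (2 * n))
            * (mk ((X:Polynomial K)^2) * mk (∑ c ∈ Finset.range (e+1),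
              (-1:Polynomial K)^c * C (algebraMap ℚ K (delta (e+1) (g+1) c)) * cheb K (2*c))) := by
              rw [ih, hstep]
        _ = (mk ((X:Polynomial K)^2) * mk (∑ n ∈ Finset.range (e+1),
              (-1:Polynomial K)^n * C ((e:K) + 1 - (n:K)) * cheb K (2 * n)))
            * mk (∑ c ∈ Finset.range (e+1),
              (-1:Polynomial K)^c * C (algebraMap ℚ K (delta (e+1) (g+1) c)) * cheb K (2*c)) := by
              ring
        _ = _ := by rw [hXK, one_mul]


lemma main_generic {K : Type*} [Field K] [Algebra ℚ K] (e g : ℕ) :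
    Ideal.Quotient.mk (Ideal.span {cheb K (e+1) - cheb K (e+1-1)})
        (∑ n ∈ Finset.range (e+1),
          C ((-1 : K) ^ n * (((e+1:ℕ) : K) - n)) * cheb K (2 * n)) ^ g
      = Ideal.Quotient.mk (Ideal.span {cheb K (e+1) - cheb K (e+1-1)})
        (∑ c ∈ Finset.range (e+1),
          C ((-1 : K) ^ c * algebraMap ℚ K (delta (e+1) g c)) * cheb K (2 * c)) := by
  have h1 : ∀ n:ℕ, C ((-1:K)^n * (((e+1:ℕ):K) - n))
      = (-1:Polynomial K)^n * C ((e:K) + 1 - (n:K)) := by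
    intro n
    have hc : (((e+1:ℕ)):K) - (n:K) = (e:K) + 1 - (n:K) := by push_cast; ring
    rw [map_mul, map_pow, map_neg, map_one, hc]
  have h2 : ∀ c:ℕ, C ((-1:K)^c * algebraMap ℚ K (delta (e+1) g c))
      = (-1:Polynomial K)^c * C (algebraMap ℚ K (delta (e+1) g c)) := by
    intro c; rw [map_mul, map_pow, map_neg, map_one]
  simp only [h1, h2]
  exact main_clean e g

/-- In the Verlinde algebra `V_p = ℚ(ζ_p)[z]/(e_d - e_{d-1})`, with
`K̂ = ∑_{n=0}^{d-1} (-1)^n (d-n) e_{2n}`, one has for all `g ≥ 0`: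
`K̂^g = ∑_{c=0}^{d-1} (-1)^c δ_g^{(2c)} e_{2c}`; equivalently
`(-1)^c δ_g^{(2c)} = M(K̂^g)_{c,0}`. -/
theorem hatK_power (d : ℕ) (hd : 1 ≤ d) (g : ℕ) :
    letI K := CyclotomicField (2 * d + 1) ℚ
    letI mk := Ideal.Quotient.mk (Ideal.span {cheb K d - cheb K (d - 1)})
    mk (∑ n ∈ Finset.range d,
          Polynomial.C ((-1 : K) ^ n * ((d : K) - n)) * cheb K (2 * n)) ^ g
      = mk (∑ c ∈ Finset.range d,
          Polynomial.C ((-1 : K) ^ c * algebraMap ℚ K (delta d g c)) * cheb K (2 * c)) := by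
  obtain ⟨e, rfl⟩ : ∃ e, d = e + 1 := ⟨d - 1, by omega⟩
  exact main_generic e g
end
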